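/- arXiv:math/0506177 — 3 statements merged into one kernel-verified Lean document; each statement's English description precedes it below -/
import Mathlib

section
/- Let A be an n×n max-plus matrix with λ(A) = 0. Then A⊙A*_{·j} = A*_{·j} (the j-th column of A* is an eigenvector of A with eigenvalue 0) if and only if j belongs to the index set of some critical cyclic permutation, i.e., some cycle through j whose average weight equals 0. -/
namespace MaxPlus

/-- Max-plus (tropical) matrix product over `EReal` (`⊥ = -∞` is the max-plus zero,
`+` is the max-plus multiplication, `⊔`/`⨆` is the max-plus addition). -/
noncomputable def mmul {n : ℕ} (A B : Matrix (Fin n) (Fin n) EReal) : Matrix (Fin n) (Fin n) EReal :=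
  fun i j => ⨆ k, A i k + B k j

/-- The max-plus identity matrix. -/
noncomputable def mId (n : ℕ) : Matrix (Fin n) (Fin n) EReal := fun i j => if i = j then 0 else ⊥

/-- Max-plus matrix powers. -/
noncomputable def mpow {n : ℕ} (A : Matrix (Fin n) (Fin n) EReal) : ℕ → Matrix (Fin n) (Fin n) EReal
  | 0 => mId n
  | m + 1 => mmul (mpow A m) A

/-- The max-plus Kleene star `A* = I ⊕ A ⊕ A² ⊕ ⋯` (entrywise supremum of all powers). -/
noncomputable def mstar {n : ℕ} (A : Matrix (Fin n) (Fin n) EReal) : Matrix (Fin n) (Fin n) EReal :=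
  fun i j => ⨆ m, mpow A m i j

/-- Weight of the cycle determined by the list `l = [i₁,…,i_k]`,
namely `A i₁ i₂ + ⋯ + A i_k i₁`. -/
noncomputable def cycleWeight {n : ℕ} (A : Matrix (Fin n) (Fin n) EReal) (l : List (Fin n)) : EReal :=
  ((l.zip (l.rotate 1)).map fun p => A p.1 p.2).sum

/-- A nonempty list of pairwise distinct indices, representing an elementary cycle. -/
def IsCycle {n : ℕ} (l : List (Fin n)) : Prop := l ≠ [] ∧ l.Nodup

/-- All elementary cycles have nonpositive weight, i.e. the maximal cycle mean `λ(A) ≤ 0`. -/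
def CycleBound {n : ℕ} (A : Matrix (Fin n) (Fin n) EReal) : Prop :=
  ∀ l : List (Fin n), IsCycle l → cycleWeight A l ≤ 0

/-- A definite matrix: maximal cycle mean `0` and zero (max-plus unit) diagonal.
(The diagonal entries give cycles of weight `0`, so `λ(A) = 0` is equivalent to
`CycleBound A` here.) -/
def Definite {n : ℕ} (A : Matrix (Fin n) (Fin n) EReal) : Prop :=
  CycleBound A ∧ ∀ i, A i i = 0

/-- Max-plus action of a matrix on a vector: `(A ⊙ x)_i = max_j (A_{ij} + x_j)`. -/
noncomputable def mapVec {n : ℕ} (A : Matrix (Fin n) (Fin n) EReal) (x : Fin n → EReal) :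
    Fin n → EReal :=
  fun i => ⨆ j, A i j + x j

/-- The max-plus eigenspace of `A` for the eigenvalue `0`. -/
def eig {n : ℕ} (A : Matrix (Fin n) (Fin n) EReal) : Set (Fin n → EReal) :=
  {x | mapVec A x = x}

/-- The max-plus column span of a matrix. -/
def mspan {n : ℕ} (A : Matrix (Fin n) (Fin n) EReal) : Set (Fin n → EReal) :=
  {y | ∃ α : Fin n → EReal, y = fun i => ⨆ j, α j + A i j}

variable {n : ℕ}

/-! ### Path weights -/

noncomputable def pathWeight (A : Matrix (Fin n) (Fin n) EReal) : List (Fin n) → EReal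
  | [] => 0
  | [_] => 0
  | a :: b :: t => A a b + pathWeight A (b :: t)

lemma pathWeight_eq_zip (A : Matrix (Fin n) (Fin n) EReal) :
    ∀ v : List (Fin n), pathWeight A v = ((v.zip v.tail).map fun p => A p.1 p.2).sum
  | [] => rfl
  | [_] => by simp [pathWeight]
  | a :: b :: t => by
      rw [show pathWeight A (a :: b :: t) = A a b + pathWeight A (b :: t) from rfl,
        pathWeight_eq_zip A (b :: t)]
      simp

lemma cycleWeight_cons (A : Matrix (Fin n) (Fin n) EReal) (i : Fin n) (t : List (Fin n)) :
    cycleWeight A (i :: t) = pathWeight A (i :: (t ++ [i])) := by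
  rw [pathWeight_eq_zip]
  unfold cycleWeight
  rw [List.rotate_cons_succ, List.rotate_zero]
  congr 1
  have h := List.zip_append (l₁ := i :: t) (r₁ := [i]) (l₂ := t ++ [i])
    (r₂ := ([] : List (Fin n))) (by simp)
  simp only [List.append_nil] at h
  rw [List.tail_cons, show i :: (t ++ [i]) = (i :: t) ++ [i] by simp, h]
  simp

lemma pathWeight_split (A : Matrix (Fin n) (Fin n) EReal) :
    ∀ (xs : List (Fin n)) (a : Fin n) (ys : List (Fin n)),
      pathWeight A (xs ++ a :: ys) = pathWeight A (xs ++ [a]) + pathWeight A (a :: ys)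
  | [], a, ys => by simp [pathWeight]
  | [x], a, ys => by
      show A x a + pathWeight A (a :: ys) = (A x a + pathWeight A [a]) + pathWeight A (a :: ys)
      simp [pathWeight, add_assoc]
  | x :: x' :: xs, a, ys => by
      have IH := pathWeight_split A (x' :: xs) a ys
      show A x x' + pathWeight A (x' :: xs ++ a :: ys)
          = (A x x' + pathWeight A (x' :: xs ++ [a])) + pathWeight A (a :: ys)
      rw [IH, add_assoc]

lemma pathWeight_splice (A : Matrix (Fin n) (Fin n) EReal) (p q r : List (Fin n)) (a : Fin n) :
    pathWeight A (p ++ a :: (q ++ a :: r))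
      = pathWeight A (p ++ a :: r) + pathWeight A (a :: (q ++ [a])) := by
  have h1 : pathWeight A (p ++ a :: (q ++ a :: r))
      = pathWeight A (p ++ [a]) + pathWeight A (a :: (q ++ a :: r)) := pathWeight_split A p a _
  have h2 : pathWeight A (a :: (q ++ a :: r))
      = pathWeight A (a :: (q ++ [a])) + pathWeight A (a :: r) := pathWeight_split A (a :: q) a r
  have h3 : pathWeight A (p ++ a :: r)
      = pathWeight A (p ++ [a]) + pathWeight A (a :: r) := pathWeight_split A p a r
  calc pathWeight A (p ++ a :: (q ++ a :: r))
      = pathWeight A (p ++ [a]) + (pathWeight A (a :: (q ++ [a])) + pathWeight A (a :: r)) := by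
        rw [← h2]; exact h1
    _ = (pathWeight A (p ++ [a]) + pathWeight A (a :: r)) + pathWeight A (a :: (q ++ [a])) := by
        rw [add_comm (pathWeight A (a :: (q ++ [a])))]; rw [add_assoc]
    _ = pathWeight A (p ++ a :: r) + pathWeight A (a :: (q ++ [a])) := by rw [← h3]

lemma cycleWeight_rot (A : Matrix (Fin n) (Fin n) EReal) (c₁ c₂ : List (Fin n)) (a : Fin n) :
    cycleWeight A (c₁ ++ a :: c₂) = cycleWeight A (a :: (c₂ ++ c₁)) := by
  cases c₁ with
  | nil => simp
  | cons h c₁' =>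
      rw [show (h :: c₁') ++ a :: c₂ = h :: (c₁' ++ a :: c₂) by simp, cycleWeight_cons,
        cycleWeight_cons]
      have e1 : (c₁' ++ a :: c₂) ++ [h] = c₁' ++ a :: (c₂ ++ [h]) := by simp
      have l1 : pathWeight A (h :: ((c₁' ++ a :: c₂) ++ [h]))
          = pathWeight A ((h :: c₁') ++ [a]) + pathWeight A (a :: (c₂ ++ [h])) := by
        rw [e1]
        exact pathWeight_split A (h :: c₁') a (c₂ ++ [h])
      have e2 : (c₂ ++ h :: c₁') ++ [a] = c₂ ++ h :: (c₁' ++ [a]) := by simp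
      have l2 : pathWeight A (a :: ((c₂ ++ h :: c₁') ++ [a]))
          = pathWeight A ((a :: c₂) ++ [h]) + pathWeight A (h :: (c₁' ++ [a])) := by
        rw [e2]
        exact pathWeight_split A (a :: c₂) h (c₁' ++ [a])
      rw [l1, l2, add_comm]
      simp

/-! ### Sup algebra -/

lemma ereal_add_iSup_fin {ι : Type*} [Finite ι] [Nonempty ι] (a : EReal) (f : ι → EReal) :
    a + ⨆ k, f k = ⨆ k, a + f k := by
  obtain ⟨k0, hk0⟩ := Finite.exists_max f
  have hs : ⨆ k, f k = f k0 := le_antisymm (iSup_le hk0) (le_iSup f k0)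
  rw [hs]
  exact le_antisymm (le_iSup (fun k => a + f k) k0)
    (iSup_le fun k => add_le_add (le_refl a) (hk0 k))

lemma ereal_iSup_add_fin {ι : Type*} [Finite ι] [Nonempty ι] (a : EReal) (f : ι → EReal) :
    (⨆ k, f k) + a = ⨆ k, f k + a := by
  rw [add_comm, ereal_add_iSup_fin]
  simp [add_comm]

lemma mmul_mId (A : Matrix (Fin n) (Fin n) EReal) : mmul A (mId n) = A := by
  funext i j
  apply le_antisymm
  · refine iSup_le fun k => ?_
    by_cases h : k = j
    · subst h; simp [mId]
    · simp [mId, h, EReal.add_bot]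
  · exact le_iSup_of_le j (by simp [mId])

lemma mId_mmul (A : Matrix (Fin n) (Fin n) EReal) : mmul (mId n) A = A := by
  funext i j
  apply le_antisymm
  · refine iSup_le fun k => ?_
    by_cases h : i = k
    · subst h; simp [mId]
    · simp [mId, h]
  · exact le_iSup_of_le i (by simp [mId])

lemma mmul_assoc (A B C : Matrix (Fin n) (Fin n) EReal) :
    mmul (mmul A B) C = mmul A (mmul B C) := by
  funext i j
  by_cases hn : Nonempty (Fin n)
  · show ⨆ k, (⨆ l, A i l + B l k) + C k j = ⨆ l, A i l + ⨆ k, B l k + C k j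
    calc ⨆ k, (⨆ l, A i l + B l k) + C k j
        = ⨆ k, ⨆ l, (A i l + B l k) + C k j := by
          refine iSup_congr fun k => ereal_iSup_add_fin _ _
      _ = ⨆ l, ⨆ k, (A i l + B l k) + C k j := iSup_comm
      _ = ⨆ l, A i l + ⨆ k, B l k + C k j := by
          refine iSup_congr fun l => ?_
          rw [ereal_add_iSup_fin]
          exact iSup_congr fun k => (add_assoc _ _ _)
  · exact absurd ⟨i⟩ hn

lemma mpow_succ' (A : Matrix (Fin n) (Fin n) EReal) (m : ℕ) :
    mpow A (m + 1) = mmul A (mpow A m) := by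
  induction m with
  | zero => show mmul (mId n) A = mmul A (mId n); rw [mId_mmul, mmul_mId]
  | succ m IH =>
      calc mmul (mpow A (m + 1)) A = mmul (mmul A (mpow A m)) A := by rw [IH]
        _ = mmul A (mmul (mpow A m) A) := mmul_assoc _ _ _
        _ = mmul A (mpow A (m + 1)) := rfl

/-! ### Paths vs powers -/

lemma pathWeight_le_mpow (A : Matrix (Fin n) (Fin n) EReal) :
    ∀ (l : List (Fin n)) (i : Fin n), pathWeight A (i :: l) ≤ mpow A l.length i (l.getLastD i)
  | [], i => by simp [pathWeight, mpow, mId]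
  | k :: l', i => by
      have IH := pathWeight_le_mpow A l' k
      have h1 : pathWeight A (i :: k :: l') = A i k + pathWeight A (k :: l') := rfl
      rw [h1, List.getLastD_cons, show (k :: l').length = l'.length + 1 from rfl, mpow_succ']
      calc A i k + pathWeight A (k :: l')
          ≤ A i k + mpow A l'.length k (l'.getLastD k) := add_le_add (le_refl _) IH
        _ ≤ ⨆ k', A i k' + mpow A l'.length k' (l'.getLastD k) :=
            le_iSup (fun k' => A i k' + mpow A l'.length k' (l'.getLastD k)) k
        _ = mmul A (mpow A l'.length) i (l'.getLastD k) := rfl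

lemma mpow_le_pathWeight (A : Matrix (Fin n) (Fin n) EReal) :
    ∀ (m : ℕ) (i z : Fin n), mpow A m i z ≠ ⊥ →
      ∃ l : List (Fin n), l.length = m ∧ l.getLastD i = z ∧
        mpow A m i z ≤ pathWeight A (i :: l)
  | 0, i, z => by
      intro h
      have hiz : i = z := by
        by_contra hc
        exact h (by simp [mpow, mId, hc])
      subst hiz
      exact ⟨[], rfl, rfl, by simp [mpow, mId, pathWeight]⟩
  | m + 1, i, z => by
      intro h
      haveI : Nonempty (Fin n) := ⟨i⟩
      rw [mpow_succ'] at h ⊢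
      obtain ⟨k0, hk0⟩ := Finite.exists_max (fun k => A i k + mpow A m k z)
      have hs : mmul A (mpow A m) i z = A i k0 + mpow A m k0 z := by
        show ⨆ k, A i k + mpow A m k z = A i k0 + mpow A m k0 z
        exact le_antisymm (iSup_le hk0) (le_iSup (fun k => A i k + mpow A m k z) k0)
      have hb : mpow A m k0 z ≠ ⊥ := by
        intro hbot
        rw [hs, hbot, EReal.add_bot] at h
        exact h rfl
      obtain ⟨l', hl1, hl2, hl3⟩ := mpow_le_pathWeight A m k0 z hb
      refine ⟨k0 :: l', by simp [hl1], by rw [List.getLastD_cons]; exact hl2, ?_⟩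
      rw [hs]
      calc A i k0 + mpow A m k0 z ≤ A i k0 + pathWeight A (k0 :: l') := add_le_add (le_refl _) hl3
        _ = pathWeight A (i :: k0 :: l') := rfl

/-! ### Cycle extraction -/

lemma exists_splice_of_not_nodup {l : List (Fin n)} (h : ¬l.Nodup) :
    ∃ (a : Fin n) (p q r : List (Fin n)), l = p ++ a :: (q ++ a :: r) := by
  obtain ⟨x, hx⟩ := List.exists_duplicate_iff_not_nodup.2 h
  have hsub : List.Sublist [x, x] l := List.duplicate_iff_sublist.1 hx
  rw [List.cons_sublist_iff] at hsub
  obtain ⟨r₁, r₂, hl, hxr₁, hsub2⟩ := hsub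
  have hxr₂ : x ∈ r₂ := List.singleton_sublist.1 hsub2
  obtain ⟨p, q₁, rfl⟩ := List.append_of_mem hxr₁
  obtain ⟨q₂, r, rfl⟩ := List.append_of_mem hxr₂
  exact ⟨x, p, q₁ ++ q₂, r, by rw [hl]; simp⟩

lemma decomp (A : Matrix (Fin n) (Fin n) EReal) (hb : CycleBound A) :
    ∀ (m : ℕ) (v : List (Fin n)) (i : Fin n), v.length = m → 2 ≤ v.length →
      v.head? = some i → v.getLast? = some i →
      ∃ c, IsCycle c ∧ i ∈ c ∧ pathWeight A v ≤ cycleWeight A c := by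
  intro m
  induction m using Nat.strong_induction_on with
  | _ m IH =>
  intro v i hlen h2 hhead hlast
  have hvne : v ≠ [] := by intro h; subst h; simp at h2
  have hglast : v.getLast hvne = i := by
    rw [List.getLast?_eq_getLast hvne] at hlast
    injection hlast
  have hvlast : v = v.dropLast ++ [i] := by
    conv_lhs => rw [← List.dropLast_append_getLast hvne]
    rw [hglast]
  have hwne : v.dropLast ≠ [] := by
    intro h
    rw [hvlast, h] at h2
    simp at h2
  obtain ⟨a, t, hw⟩ : ∃ a t, v.dropLast = a :: t := by
    cases hvd : v.dropLast with
    | nil => exact absurd hvd hwne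
    | cons a t => exact ⟨a, t, rfl⟩
  have hai : a = i := by
    rw [hvlast, hw] at hhead
    simp at hhead
    exact hhead
  subst hai
  have hv : v = a :: (t ++ [a]) := by rw [hvlast, hw]; rfl
  by_cases hnd : (a :: t).Nodup
  · refine ⟨a :: t, ⟨List.cons_ne_nil _ _, hnd⟩, List.mem_cons_self, ?_⟩
    rw [hv, ← cycleWeight_cons]
  · obtain ⟨x, p, q, r, hsp⟩ := exists_splice_of_not_nodup hnd
    have hv2 : v = p ++ x :: (q ++ x :: (r ++ [a])) := by
      rw [hvlast, hw, hsp]; simp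
    have hpw : pathWeight A v
        = pathWeight A (p ++ x :: (r ++ [a])) + pathWeight A (x :: (q ++ [x])) := by
      rw [hv2]; exact pathWeight_splice A p q (r ++ [a]) x
    -- length bookkeeping
    have hm : m = p.length + q.length + r.length + 3 := by
      have h1 : v.length = (a :: t).length + 1 := by rw [hvlast, hw]; simp
      rw [← hlen, h1, hsp]; simp; omega
    -- piece 2 : closed walk at x
    have hc2 : ∃ c, IsCycle c ∧ x ∈ c ∧
        pathWeight A (x :: (q ++ [x])) ≤ cycleWeight A c := by
      refine IH (q.length + 2) (by omega) (x :: (q ++ [x])) x (by simp) (by simp) rfl ?_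
      show (x :: (q ++ [x])).getLast? = some x
      rw [show x :: (q ++ [x]) = (x :: q) ++ [x] from rfl]
      exact List.getLast?_concat
    obtain ⟨c₂, hc₂cyc, _, hc₂le⟩ := hc2
    have hpw2 : pathWeight A (x :: (q ++ [x])) ≤ 0 := hc₂le.trans (hb c₂ hc₂cyc)
    -- piece 1 : closed walk at i (= a)
    have hhead1 : (p ++ x :: (r ++ [a])).head? = some a := by
      cases p with
      | nil =>
          have h' : a :: t = x :: (q ++ x :: r) := by simpa using hsp
          have hax : a = x := by injection h'
          simp [hax]
      | cons p₀ p' =>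
          have h' : a :: t = p₀ :: (p' ++ x :: (q ++ x :: r)) := by simpa using hsp
          have hax : a = p₀ := by injection h'
          simp [← hax]
    have hlast1 : (p ++ x :: (r ++ [a])).getLast? = some a := by
      rw [show p ++ x :: (r ++ [a]) = (p ++ x :: r) ++ [a] by simp]
      exact List.getLast?_concat
    have hc1 : ∃ c, IsCycle c ∧ a ∈ c ∧
        pathWeight A (p ++ x :: (r ++ [a])) ≤ cycleWeight A c := by
      refine IH (p.length + r.length + 2) (by omega) _ a (by simp; omega) (by simp; omega)
        hhead1 hlast1
    obtain ⟨c₁, hc₁cyc, hc₁mem, hc₁le⟩ := hc1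
    refine ⟨c₁, hc₁cyc, hc₁mem, ?_⟩
    calc pathWeight A v
        = pathWeight A (p ++ x :: (r ++ [a])) + pathWeight A (x :: (q ++ [x])) := hpw
      _ ≤ cycleWeight A c₁ + 0 := add_le_add hc₁le hpw2
      _ = cycleWeight A c₁ := add_zero _

lemma getLast?_cons' (a : Fin n) (l : List (Fin n)) :
    (a :: l).getLast? = some (l.getLastD a) := by
  rw [List.getLast?_cons, List.getLastD_eq_getLast?]

lemma closed_nonpos (A : Matrix (Fin n) (Fin n) EReal) (hb : CycleBound A)
    (x : Fin n) (q : List (Fin n)) : pathWeight A (x :: (q ++ [x])) ≤ 0 := by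
  obtain ⟨c, hc, _, hle⟩ := decomp A hb (q.length + 2) (x :: (q ++ [x])) x (by simp) (by simp)
    rfl (by rw [show x :: (q ++ [x]) = (x :: q) ++ [x] from rfl]; exact List.getLast?_concat)
  exact hle.trans (hb c hc)

lemma head?_splice (p : List (Fin n)) (x i : Fin n) (s s' : List (Fin n))
    (h : (p ++ x :: s).head? = some i) : (p ++ x :: s').head? = some i := by
  cases p with
  | nil => simpa using h
  | cons p₀ p' => simpa using h

lemma mpow_bounded (A : Matrix (Fin n) (Fin n) EReal) (hb : CycleBound A) :
    ∀ (m : ℕ) (i z : Fin n), ∃ m' ≤ n, mpow A m i z ≤ mpow A m' i z := by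
  intro m
  induction m using Nat.strong_induction_on with
  | _ m IH =>
  intro i z
  by_cases hm : m ≤ n
  · exact ⟨m, hm, le_rfl⟩
  · by_cases hbot : mpow A m i z = ⊥
    · exact ⟨0, Nat.zero_le n, by rw [hbot]; exact bot_le⟩
    · obtain ⟨l, hl1, hl2, hl3⟩ := mpow_le_pathWeight A m i z hbot
      have hnd : ¬(i :: l).Nodup := by
        intro hnd
        have := hnd.length_le_card
        rw [Fintype.card_fin] at this
        simp [hl1] at this
        omega
      obtain ⟨x, p, q, r, hsp⟩ := exists_splice_of_not_nodup hnd
      have hpw : pathWeight A (i :: l)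
          = pathWeight A (p ++ x :: r) + pathWeight A (x :: (q ++ [x])) := by
        rw [hsp]; exact pathWeight_splice A p q r x
      have hlen : l.length = p.length + q.length + r.length + 1 := by
        have : (i :: l).length = (p ++ x :: (q ++ x :: r)).length := by rw [hsp]
        simp at this
        omega
      -- piece 1 head
      have hh1 : (p ++ x :: r).head? = some i := by
        refine head?_splice p x i (q ++ x :: r) r ?_
        rw [← hsp]; rfl
      -- piece 1 last
      have hlast0 : (i :: l).getLast? = some z := by rw [getLast?_cons', hl2]
      have hl1' : (p ++ x :: r).getLast? = some z := by
        cases r with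
        | nil =>
            have e1 : i :: l = (p ++ x :: q) ++ [x] := by rw [hsp]; simp
            rw [e1, List.getLast?_concat] at hlast0
            have : x = z := by injection hlast0
            rw [show p ++ x :: ([] : List (Fin n)) = p ++ [x] from rfl, List.getLast?_concat, this]
        | cons r₀ r' =>
            have e1 : i :: l = (p ++ x :: q ++ [x]) ++ (r₀ :: r') := by rw [hsp]; simp
            rw [e1, List.getLast?_append_of_ne_nil _ (by simp)] at hlast0
            rw [show p ++ x :: (r₀ :: r') = (p ++ [x]) ++ (r₀ :: r') by simp,
              List.getLast?_append_of_ne_nil _ (by simp)]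
            exact hlast0
      -- cons form of piece 1
      obtain ⟨s, hs⟩ : ∃ s, p ++ x :: r = i :: s := by
        cases hp1 : p ++ x :: r with
        | nil => exact absurd hp1 (by simp)
        | cons b s =>
            rw [hp1] at hh1
            have : b = i := by simpa using hh1
            exact ⟨s, by rw [this]⟩
      have hsz : s.getLastD i = z := by
        rw [hs, getLast?_cons'] at hl1'
        injection hl1'
      have hslen : s.length < m := by
        have : (p ++ x :: r).length = s.length + 1 := by rw [hs]; rfl
        simp at this
        omega
      obtain ⟨m', hm'n, hm'⟩ := IH s.length hslen i z
      refine ⟨m', hm'n, ?_⟩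
      calc mpow A m i z ≤ pathWeight A (i :: l) := hl3
        _ = pathWeight A (p ++ x :: r) + pathWeight A (x :: (q ++ [x])) := hpw
        _ ≤ pathWeight A (p ++ x :: r) + 0 := add_le_add (le_refl _) (closed_nonpos A hb x q)
        _ = pathWeight A (i :: s) := by rw [add_zero, hs]
        _ ≤ mpow A s.length i (s.getLastD i) := pathWeight_le_mpow A s i
        _ = mpow A s.length i z := by rw [hsz]
        _ ≤ mpow A m' i z := hm'

/-! ### Star column -/

lemma mstar_attained (A : Matrix (Fin n) (Fin n) EReal) (hb : CycleBound A) (i z : Fin n) :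
    ∃ m0, ∀ m, mpow A m i z ≤ mpow A m0 i z := by
  obtain ⟨b, _, hbmax⟩ := Finset.exists_max_image (Finset.range (n + 1))
    (fun m => mpow A m i z) ⟨0, by simp⟩
  refine ⟨b, fun m => ?_⟩
  obtain ⟨m', hm'n, hm'⟩ := mpow_bounded A hb m i z
  exact hm'.trans (hbmax m' (Finset.mem_range.2 (by omega)))

lemma mstar_split (A : Matrix (Fin n) (Fin n) EReal) (i z : Fin n) :
    mstar A i z = mId n i z ⊔ ⨆ m, mpow A (m + 1) i z := by
  apply le_antisymm
  · refine iSup_le fun m => ?_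
    cases m with
    | zero => exact le_sup_of_le_left le_rfl
    | succ m => exact le_sup_of_le_right (le_iSup (fun m => mpow A (m + 1) i z) m)
  · exact sup_le (le_iSup (fun m => mpow A m i z) 0)
      (iSup_le fun m => le_iSup (fun m' => mpow A m' i z) (m + 1))

lemma mapVec_star (A : Matrix (Fin n) (Fin n) EReal) (hb : CycleBound A) (j i : Fin n) :
    mapVec A (fun k => mstar A k j) i = ⨆ m, mpow A (m + 1) i j := by
  haveI : Nonempty (Fin n) := ⟨i⟩
  apply le_antisymm
  · refine iSup_le fun k => ?_
    obtain ⟨m0, hm0⟩ := mstar_attained A hb k j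
    have hx : mstar A k j = mpow A m0 k j :=
      le_antisymm (iSup_le hm0) (le_iSup (fun m => mpow A m k j) m0)
    show A i k + mstar A k j ≤ _
    rw [hx]
    have h1 : A i k + mpow A m0 k j ≤ mpow A (m0 + 1) i j := by
      rw [mpow_succ']
      exact le_iSup (fun k' => A i k' + mpow A m0 k' j) k
    exact h1.trans (le_iSup (fun m => mpow A (m + 1) i j) m0)
  · refine iSup_le fun m => ?_
    rw [mpow_succ']
    refine iSup_le fun k => ?_
    refine le_trans (add_le_add (le_refl _) (le_iSup (fun m' => mpow A m' k j) m)) ?_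
    exact le_iSup (fun k' => A i k' + mstar A k' j) k

lemma mpow_jj_le (A : Matrix (Fin n) (Fin n) EReal) (hb : CycleBound A) (j : Fin n)
    (c₀ : List (Fin n)) (hmax : ∀ c, IsCycle c → j ∈ c → cycleWeight A c ≤ cycleWeight A c₀)
    (m : ℕ) : mpow A (m + 1) j j ≤ cycleWeight A c₀ := by
  by_cases hbot : mpow A (m + 1) j j = ⊥
  · rw [hbot]; exact bot_le
  · obtain ⟨l, hl1, hl2, hl3⟩ := mpow_le_pathWeight A (m + 1) j j hbot
    obtain ⟨c, hc, hmem, hle⟩ := decomp A hb (m + 2) (j :: l) j (by simp [hl1])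
      (by simp [hl1]) rfl (by rw [getLast?_cons', hl2])
    exact hl3.trans (hle.trans (hmax c hc hmem))

theorem column_eigenvector_iff_critical' (A : Matrix (Fin n) (Fin n) EReal)
    (hb : CycleBound A) (j : Fin n) :
    mapVec A (fun i => mstar A i j) = (fun i => mstar A i j) ↔
      ∃ l : List (Fin n), IsCycle l ∧ cycleWeight A l = 0 ∧ j ∈ l := by
  constructor
  · intro h
    have hfin : {c : List (Fin n) | IsCycle c ∧ j ∈ c}.Finite := by
      refine (List.finite_length_le (Fin n) n).subset fun c hc => ?_
      have := hc.1.2.length_le_card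
      rwa [Fintype.card_fin] at this
    have hSne : {c : List (Fin n) | IsCycle c ∧ j ∈ c}.Nonempty :=
      ⟨[j], ⟨⟨by simp, by simp⟩, by simp⟩⟩
    obtain ⟨c₀, hc₀S, hc₀max⟩ := Set.exists_max_image _ (cycleWeight A) hfin hSne
    have hmax : ∀ c, IsCycle c → j ∈ c → cycleWeight A c ≤ cycleWeight A c₀ :=
      fun c h1 h2 => hc₀max c ⟨h1, h2⟩
    have hj := congrFun h j
    have hsplit := mstar_split A j j
    have hmap := mapVec_star A hb j j
    rw [hmap] at hj
    rw [show mId n j j = 0 by simp [mId]] at hsplit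
    -- hj : ⨆ m, mpow A (m+1) j j = mstar A j j
    have h0le : (0 : EReal) ≤ ⨆ m, mpow A (m + 1) j j := by
      rw [hj, hsplit]
      exact le_sup_left
    have hle0 : (⨆ m, mpow A (m + 1) j j) ≤ cycleWeight A c₀ :=
      iSup_le (mpow_jj_le A hb j c₀ hmax)
    exact ⟨c₀, hc₀S.1, le_antisymm (hb c₀ hc₀S.1) (h0le.trans hle0), hc₀S.2⟩
  · rintro ⟨c, ⟨hcne, hcnd⟩, hcw, hcj⟩
    obtain ⟨c₁, c₂, rfl⟩ := List.append_of_mem hcj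
    have hrot : cycleWeight A (j :: (c₂ ++ c₁)) = 0 := by rw [← cycleWeight_rot]; exact hcw
    funext i
    show mapVec A (fun k => mstar A k j) i = mstar A i j
    rw [mapVec_star A hb j i, mstar_split A i j]
    by_cases hij : i = j
    · subst hij
      rw [show mId n i i = 0 by simp [mId]]
      refine (sup_eq_right.mpr ?_).symm
      set t := c₂ ++ c₁ with ht
      have h1 : (0 : EReal) = pathWeight A (i :: (t ++ [i])) := by
        rw [← cycleWeight_cons, hrot]
      have h2 : pathWeight A (i :: (t ++ [i]))
          ≤ mpow A (t ++ [i]).length i ((t ++ [i]).getLastD i) := pathWeight_le_mpow A _ i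
      rw [List.getLastD_concat, show (t ++ [i]).length = t.length + 1 by simp] at h2
      calc (0 : EReal) = pathWeight A (i :: (t ++ [i])) := h1
        _ ≤ mpow A (t.length + 1) i i := h2
        _ ≤ ⨆ m, mpow A (m + 1) i i := le_iSup (fun m => mpow A (m + 1) i i) t.length
    · rw [show mId n i j = ⊥ by simp [mId, hij]]
      exact (bot_sup_eq _).symm


/-- For a matrix with `λ(A) = 0`, the `j`-th column of `A*` is an eigenvector of `A`
(for the eigenvalue `0`) iff `j` lies on some critical cycle, i.e. some cycle through
`j` of weight (equivalently, average weight) `0`. -/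
theorem column_eigenvector_iff_critical {n : ℕ} (A : Matrix (Fin n) (Fin n) EReal)
    (hA : ∀ i j, A i j ≠ ⊤) (hb : CycleBound A)
    (h0 : ∃ l : List (Fin n), IsCycle l ∧ cycleWeight A l = 0) (j : Fin n) :
    mapVec A (fun i => mstar A i j) = (fun i => mstar A i j) ↔
      ∃ l : List (Fin n), IsCycle l ∧ cycleWeight A l = 0 ∧ j ∈ l := by
  exact column_eigenvector_iff_critical' A hb j

end MaxPlus
end

section
/- Let A be any n×n max-plus matrix with finite permanent (at least one permutation σ with all A_{iσ(i)} finite). Then the Kleene stars of all definite forms of A coincide: if σ and ρ are two maximal permutations of A with corresponding definite forms A'_{ij} = A_{iσ(j)} - A_{jσ(j)} and A''_{ij} = A_{iρ(j)} - A_{jρ(j)}, then (A')* = (A'')*. -/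
namespace MaxPlus

lemma coe_sum {α : Type*} (s : Finset α) (f : α → ℝ) :
    ((∑ i ∈ s, f i : ℝ) : EReal) = ∑ i ∈ s, (f i : EReal) := by
  induction s using Finset.cons_induction with
  | empty => simp
  | cons a s ha ih => rw [Finset.sum_cons, Finset.sum_cons, EReal.coe_add, ih]

lemma sum_ne_bot {α : Type*} {s : Finset α} {f : α → EReal}
    (htop : ∀ i ∈ s, f i ≠ ⊤) (h : ∑ i ∈ s, f i ≠ ⊥) : ∀ i ∈ s, f i ≠ ⊥ := by
  induction s using Finset.cons_induction with
  | empty => intro i hi; exact absurd hi (by simp)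
  | cons a s ha ih =>
    rw [Finset.sum_cons] at h
    have hfa : f a ≠ ⊥ := by
      intro hfa; rw [hfa, EReal.bot_add] at h; exact h rfl
    have hs : ∑ i ∈ s, f i ≠ ⊥ := by
      intro hs; rw [hs, EReal.add_bot] at h; exact h rfl
    intro i hi
    rcases Finset.mem_cons.mp hi with rfl | hi
    · exact hfa
    · exact ih (fun i hi => htop i (Finset.mem_cons_of_mem hi)) hs i hi

lemma isup_eq {n : ℕ} [Nonempty (Fin n)] (f : Fin n → EReal) : ∃ k, (⨆ j, f j) = f k := by
  obtain ⟨k, hk⟩ := Finite.exists_max f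
  exact ⟨k, le_antisymm (iSup_le hk) (le_iSup f k)⟩

lemma pow_le_star {n : ℕ} (B : Matrix (Fin n) (Fin n) EReal) (m : ℕ) (i j : Fin n) :
    mpow B m i j ≤ mstar B i j := le_iSup (fun m => mpow B m i j) m

lemma zero_le_star_diag {n : ℕ} (B : Matrix (Fin n) (Fin n) EReal) (i : Fin n) :
    (0 : EReal) ≤ mstar B i i := by
  have h0 : mpow B 0 i i = 0 := by simp [mpow, mId]
  exact h0 ▸ pow_le_star B 0 i i

lemma entry_le_star {n : ℕ} (B : Matrix (Fin n) (Fin n) EReal) (i j : Fin n) :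
    B i j ≤ mstar B i j := by
  have h1 : B i j ≤ mpow B 1 i j := by
    have : mId n i i + B i j ≤ ⨆ k, mId n i k + B k j := le_iSup (fun k => mId n i k + B k j) i
    simpa [mId, mpow, mmul] using this
  exact h1.trans (pow_le_star B 1 i j)

lemma mpow_add_le {n : ℕ} (B : Matrix (Fin n) (Fin n) EReal) (a b : ℕ) (i k j : Fin n) :
    mpow B a i k + mpow B b k j ≤ mpow B (a + b) i j := by
  have : Nonempty (Fin n) := ⟨i⟩
  induction b generalizing j with
  | zero =>
    by_cases h : k = j
    · subst h
      simpa [mpow, mId] using le_rfl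
    · simp [mpow, mId, h, EReal.add_bot]
  | succ b ih =>
    have hrw : mpow B (b + 1) k j = ⨆ l, mpow B b k l + B l j := rfl
    obtain ⟨l, hl⟩ := isup_eq (fun l => mpow B b k l + B l j)
    rw [hrw, hl]
    calc mpow B a i k + (mpow B b k l + B l j)
        = (mpow B a i k + mpow B b k l) + B l j := by rw [add_assoc]
      _ ≤ mpow B (a + b) i l + B l j := add_le_add (ih l) le_rfl
      _ ≤ ⨆ l', mpow B (a + b) i l' + B l' j :=
          le_iSup (fun l' => mpow B (a + b) i l' + B l' j) l
      _ = mpow B (a + b + 1) i j := rfl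

lemma star_trans {n : ℕ} (B : Matrix (Fin n) (Fin n) EReal) (i k j : Fin n) :
    mstar B i k + mstar B k j ≤ mstar B i j := by
  apply EReal.add_le_of_forall_lt
  intro x hx y hy
  rw [show mstar B i k = ⨆ m, mpow B m i k from rfl, lt_iSup_iff] at hx
  rw [show mstar B k j = ⨆ m, mpow B m k j from rfl, lt_iSup_iff] at hy
  obtain ⟨a, hx⟩ := hx
  obtain ⟨b, hy⟩ := hy
  calc x + y ≤ mpow B a i k + mpow B b k j := add_le_add hx.le hy.le
    _ ≤ mpow B (a + b) i j := mpow_add_le B a b i k j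
    _ ≤ mstar B i j := pow_le_star B _ i j

lemma walk_le {n : ℕ} (B : Matrix (Fin n) (Fin n) EReal) (p : ℕ → Fin n) (m : ℕ) :
    (∑ t ∈ Finset.range m, B (p t) (p (t + 1))) ≤ mpow B m (p 0) (p m) := by
  induction m with
  | zero => simp [mpow, mId]
  | succ m ih =>
    rw [Finset.sum_range_succ]
    calc (∑ t ∈ Finset.range m, B (p t) (p (t + 1))) + B (p m) (p (m + 1))
        ≤ mpow B m (p 0) (p m) + B (p m) (p (m + 1)) := add_le_add ih le_rfl
      _ ≤ ⨆ k, mpow B m (p 0) k + B k (p (m + 1)) :=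
          le_iSup (fun k => mpow B m (p 0) k + B k (p (m + 1))) (p m)
      _ = mpow B (m + 1) (p 0) (p (m + 1)) := rfl

lemma star_le_star {n : ℕ} (A : Matrix (Fin n) (Fin n) EReal)
    (hA : ∀ i j, A i j ≠ ⊤)
    (hfin : ∃ π : Equiv.Perm (Fin n), ∀ i, A i (π i) ≠ ⊥)
    (σ ρ : Equiv.Perm (Fin n))
    (hσ : ∀ π : Equiv.Perm (Fin n), (∑ i, A i (π i)) ≤ ∑ i, A i (σ i))
    (hρ : ∀ π : Equiv.Perm (Fin n), (∑ i, A i (π i)) ≤ ∑ i, A i (ρ i))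
    (i j : Fin n) :
    mstar (fun i j => A i (ρ j) - A j (ρ j)) i j ≤
      mstar (fun i j => A i (σ j) - A j (σ j)) i j := by
  classical
  have hne : Nonempty (Fin n) := ⟨i⟩
  set A' : Matrix (Fin n) (Fin n) EReal := fun i j => A i (σ j) - A j (σ j) with hA'
  set A'' : Matrix (Fin n) (Fin n) EReal := fun i j => A i (ρ j) - A j (ρ j) with hA''
  -- finiteness of diagonal entries
  obtain ⟨π₀, hπ₀⟩ := hfin
  have hsum₀ : (∑ i, A i (π₀ i)) = ((∑ i, (A i (π₀ i)).toReal : ℝ) : EReal) := by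
    rw [coe_sum]
    exact Finset.sum_congr rfl fun i _ => (EReal.coe_toReal (hA _ _) (hπ₀ i)).symm
  have hσbot : (∑ i, A i (σ i)) ≠ ⊥ := by
    intro h
    have h2 := (hσ π₀).trans_eq h
    rw [le_bot_iff, hsum₀] at h2
    exact EReal.coe_ne_bot _ h2
  have hρbot : (∑ i, A i (ρ i)) ≠ ⊥ := by
    intro h
    have h2 := (hρ π₀).trans_eq h
    rw [le_bot_iff, hsum₀] at h2
    exact EReal.coe_ne_bot _ h2
  set r : Fin n → ℝ := fun i => (A i (σ i)).toReal with hrdef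
  set s : Fin n → ℝ := fun i => (A i (ρ i)).toReal with hsdef
  have hr : ∀ k, ((r k : ℝ) : EReal) = A k (σ k) := fun k =>
    EReal.coe_toReal (hA _ _) (sum_ne_bot (fun x _ => hA _ _) hσbot k (Finset.mem_univ k))
  have hs : ∀ k, ((s k : ℝ) : EReal) = A k (ρ k) := fun k =>
    EReal.coe_toReal (hA _ _) (sum_ne_bot (fun x _ => hA _ _) hρbot k (Finset.mem_univ k))
  set τ : Equiv.Perm (Fin n) := ρ.trans σ.symm with hτdef
  have hτ : ∀ k, σ (τ k) = ρ k := fun k => σ.apply_symm_apply (ρ k)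
  set d : Fin n → ℝ := fun k => r (τ k) - s k with hddef
  -- the special edges
  have key1 : ∀ k, A' k (τ k) = ((-(d k) : ℝ) : EReal) := by
    intro k
    have e1 : A k (σ (τ k)) = ((s k : ℝ) : EReal) := by rw [hτ k]; exact (hs k).symm
    have e2 : A (τ k) (σ (τ k)) = ((r (τ k) : ℝ) : EReal) := (hr (τ k)).symm
    show A k (σ (τ k)) - A (τ k) (σ (τ k)) = _
    rw [e1, e2, ← EReal.coe_sub, EReal.coe_eq_coe_iff]
    simp only [hddef]
    ring
  have key2 : ∀ a b, A'' a b ≤ A' a (τ b) + ((d b : ℝ) : EReal) := by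
    intro a b
    have e2 : A (τ b) (ρ b) = ((r (τ b) : ℝ) : EReal) := by
      rw [← hτ b]; exact (hr (τ b)).symm
    show A a (ρ b) - A b (ρ b) ≤ (A a (σ (τ b)) - A (τ b) (σ (τ b))) + _
    rw [hτ b, e2, ← hs b]
    by_cases hb : A a (ρ b) = ⊥
    · rw [hb]
      rw [sub_eq_add_neg, EReal.bot_add]
      exact bot_le
    · have hx := EReal.coe_toReal (hA a (ρ b)) hb
      rw [← hx, ← EReal.coe_sub, ← EReal.coe_sub, ← EReal.coe_add, EReal.coe_le_coe_iff]
      simp only [hddef]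
      ring_nf
      exact le_rfl
  -- per-cycle sum bound from maximality of ρ
  have hcycle : ∀ C : Finset (Fin n), Finset.image (⇑τ) C = C →
      ∑ k ∈ C, r k ≤ ∑ k ∈ C, s k := by
    intro C hC
    have hρσ : Finset.image (⇑ρ) C = Finset.image (⇑σ) C := by
      conv_rhs => rw [← hC]
      rw [Finset.image_image]
      apply Finset.image_congr
      intro x _
      exact (hτ x).symm
    set πf : Fin n → Fin n := fun x => if x ∈ C then σ x else ρ x with hπf
    have hinj : Function.Injective πf := by
      intro a b hab
      simp only [hπf] at hab
      by_cases ha : a ∈ C <;> by_cases hb : b ∈ C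
      · rw [if_pos ha, if_pos hb] at hab; exact σ.injective hab
      · rw [if_pos ha, if_neg hb] at hab
        exfalso
        have hmem : ρ b ∈ Finset.image (⇑σ) C := Finset.mem_image.mpr ⟨a, ha, hab⟩
        rw [← hρσ] at hmem
        obtain ⟨c, hc, hcb⟩ := Finset.mem_image.mp hmem
        exact hb (ρ.injective hcb ▸ hc)
      · rw [if_neg ha, if_pos hb] at hab
        exfalso
        have hmem : ρ a ∈ Finset.image (⇑σ) C := Finset.mem_image.mpr ⟨b, hb, hab.symm⟩
        rw [← hρσ] at hmem
        obtain ⟨c, hc, hcb⟩ := Finset.mem_image.mp hmem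
        exact ha (ρ.injective hcb ▸ hc)
      · rw [if_neg ha, if_neg hb] at hab; exact ρ.injective hab
    have hbij := Finite.injective_iff_bijective.mp hinj
    have hle : ∑ x, A x (πf x) ≤ ∑ x, A x (ρ x) := hρ (Equiv.ofBijective πf hbij)
    have eL : ∑ x, A x (πf x)
        = ((∑ k ∈ C, r k + ∑ k ∈ Cᶜ, s k : ℝ) : EReal) := by
      rw [← Finset.sum_add_sum_compl C (fun x => A x (πf x)), EReal.coe_add, coe_sum, coe_sum]
      congr 1
      · refine Finset.sum_congr rfl fun x hx => ?_
        simp only [hπf]; rw [if_pos hx]; exact (hr x).symm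
      · refine Finset.sum_congr rfl fun x hx => ?_
        simp only [hπf]; rw [if_neg (Finset.mem_compl.mp hx)]; exact (hs x).symm
    have eR : ∑ x, A x (ρ x)
        = ((∑ k ∈ C, s k + ∑ k ∈ Cᶜ, s k : ℝ) : EReal) := by
      rw [← Finset.sum_add_sum_compl C (fun x => A x (ρ x)), EReal.coe_add, coe_sum, coe_sum]
      congr 1
      · exact Finset.sum_congr rfl fun x _ => (hs x).symm
      · exact Finset.sum_congr rfl fun x _ => (hs x).symm
    rw [eL, eR, EReal.coe_le_coe_iff] at hle
    linarith
  -- going around the τ-cycle through b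
  have keyB : ∀ b, ((d b : ℝ) : EReal) ≤ mstar A' (τ b) b := by
    intro b
    have hmem : b ∈ Function.periodicPts ⇑τ :=
      ⟨orderOf τ, orderOf_pos τ, by
        show (⇑τ)^[orderOf τ] b = b
        rw [Equiv.Perm.iterate_eq_pow, pow_orderOf_eq_one]; rfl⟩
    set ℓ := Function.minimalPeriod (⇑τ) b with hℓ
    have hpos : 0 < ℓ := Function.minimalPeriod_pos_of_mem_periodicPts hmem
    have hper : (⇑τ)^[ℓ] b = b := Function.iterate_minimalPeriod
    set C : Finset (Fin n) := (Finset.range ℓ).image (fun t => (⇑τ)^[t] b) with hCdef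
    have hinjC : ∀ x ∈ Finset.range ℓ, ∀ y ∈ Finset.range ℓ,
        (⇑τ)^[x] b = (⇑τ)^[y] b → x = y := fun x hx y hy hxy =>
      Function.iterate_injOn_Iio_minimalPeriod
        (Finset.mem_range.mp hx) (Finset.mem_range.mp hy) hxy
    have hCim : Finset.image (⇑τ) C = C := by
      apply Finset.eq_of_subset_of_card_le
      · intro k hk
        obtain ⟨k', hk', rfl⟩ := Finset.mem_image.mp hk
        obtain ⟨t, ht, rfl⟩ := Finset.mem_image.mp hk'
        rw [Finset.mem_range] at ht
        rw [← Function.iterate_succ_apply' (⇑τ) t b]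
        rcases eq_or_lt_of_le (Nat.succ_le_of_lt ht) with heq | hlt
        · rw [heq, hper]
          exact Finset.mem_image.mpr ⟨0, Finset.mem_range.mpr hpos, rfl⟩
        · exact Finset.mem_image.mpr ⟨t + 1, Finset.mem_range.mpr hlt, rfl⟩
      · rw [Finset.card_image_of_injective _ τ.injective]
    have hsumC : ∑ t ∈ Finset.range ℓ, d ((⇑τ)^[t] b) = ∑ k ∈ C, d k := by
      rw [hCdef, Finset.sum_image hinjC]
    have hrsum : ∑ k ∈ C, r (τ k) = ∑ k ∈ C, r k := by
      have h1 : ∑ k ∈ C, r (τ k) = ∑ k ∈ Finset.image (⇑τ) C, r k :=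
        (Finset.sum_image (fun x _ y _ h => τ.injective h)).symm
      rw [h1, hCim]
    have hdC : ∑ k ∈ C, d k ≤ 0 := by
      have h1 : ∑ k ∈ C, d k = ∑ k ∈ C, r (τ k) - ∑ k ∈ C, s k := by
        simp only [hddef]
        rw [Finset.sum_sub_distrib]
      rw [h1, hrsum, sub_nonpos]
      exact hcycle C hCim
    have h2 : ∑ t ∈ Finset.range ℓ, d ((⇑τ)^[t] b)
        = (∑ t ∈ Finset.range (ℓ - 1), d ((⇑τ)^[t + 1] b)) + d b := by
      conv_lhs => rw [show ℓ = (ℓ - 1) + 1 from (Nat.succ_pred_eq_of_pos hpos).symm]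
      rw [Finset.sum_range_succ' (fun t => d ((⇑τ)^[t] b)) (ℓ - 1)]
      simp
    have h5 : ∑ t ∈ Finset.range ℓ, d ((⇑τ)^[t] b) ≤ 0 := by rw [hsumC]; exact hdC
    have hdsum : d b + ∑ t ∈ Finset.range (ℓ - 1), d ((⇑τ)^[t + 1] b) ≤ 0 := by
      linarith [h2 ▸ h5]
    have hwalk := walk_le A' (fun t => (⇑τ)^[t + 1] b) (ℓ - 1)
    have hp0 : (⇑τ)^[0 + 1] b = τ b := by simp
    have hpend : (⇑τ)^[(ℓ - 1) + 1] b = b := by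
      rw [Nat.sub_add_cancel hpos]; exact hper
    have hedge : ∀ t, A' ((⇑τ)^[t + 1] b) ((⇑τ)^[t + 1 + 1] b)
        = ((-(d ((⇑τ)^[t + 1] b)) : ℝ) : EReal) := by
      intro t
      rw [Function.iterate_succ_apply' (⇑τ) (t + 1) b]
      exact key1 _
    calc ((d b : ℝ) : EReal)
        ≤ ((-∑ t ∈ Finset.range (ℓ - 1), d ((⇑τ)^[t + 1] b) : ℝ) : EReal) := by
          rw [EReal.coe_le_coe_iff]; linarith
      _ = ∑ t ∈ Finset.range (ℓ - 1), ((-(d ((⇑τ)^[t + 1] b)) : ℝ) : EReal) := by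
          rw [← Finset.sum_neg_distrib, coe_sum]
      _ = ∑ t ∈ Finset.range (ℓ - 1), A' ((⇑τ)^[t + 1] b) ((⇑τ)^[t + 1 + 1] b) :=
          Finset.sum_congr rfl fun t _ => (hedge t).symm
      _ ≤ mpow A' (ℓ - 1) ((⇑τ)^[0 + 1] b) ((⇑τ)^[(ℓ - 1) + 1] b) := hwalk
      _ = mpow A' (ℓ - 1) (τ b) b := by rw [hp0, hpend]
      _ ≤ mstar A' (τ b) b := pow_le_star _ _ _ _
  have stepA : ∀ a b, A'' a b ≤ mstar A' a b := by
    intro a b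
    calc A'' a b ≤ A' a (τ b) + ((d b : ℝ) : EReal) := key2 a b
      _ ≤ mstar A' a (τ b) + mstar A' (τ b) b :=
          add_le_add (entry_le_star A' a (τ b)) (keyB b)
      _ ≤ mstar A' a b := star_trans A' a (τ b) b
  have main : ∀ m a b, mpow A'' m a b ≤ mstar A' a b := by
    intro m
    induction m with
    | zero =>
      intro a b
      by_cases h : a = b
      · subst h
        calc mpow A'' 0 a a = 0 := by simp [mpow, mId]
          _ ≤ mstar A' a a := zero_le_star_diag A' a
      · calc mpow A'' 0 a b = ⊥ := by simp [mpow, mId, h]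
          _ ≤ mstar A' a b := bot_le
    | succ m ih =>
      intro a b
      show (⨆ k, mpow A'' m a k + A'' k b) ≤ mstar A' a b
      refine iSup_le fun k => ?_
      calc mpow A'' m a k + A'' k b ≤ mstar A' a k + mstar A' k b :=
          add_le_add (ih a k) (stepA k b)
        _ ≤ mstar A' a b := star_trans A' a k b
  show (⨆ m, mpow A'' m i j) ≤ mstar A' i j
  exact iSup_le fun m => main m i j


/-- For a matrix with finite permanent, the Kleene stars of all of its definite forms
coincide: for any two maximal permutations `σ, ρ`, the closures of the corresponding
definite forms are equal (the "definite closure" of `A`). -/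
theorem definite_closure_well_defined {n : ℕ} (A : Matrix (Fin n) (Fin n) EReal)
    (hA : ∀ i j, A i j ≠ ⊤)
    (hfin : ∃ π : Equiv.Perm (Fin n), ∀ i, A i (π i) ≠ ⊥)
    (σ ρ : Equiv.Perm (Fin n))
    (hσ : ∀ π : Equiv.Perm (Fin n), (∑ i, A i (π i)) ≤ ∑ i, A i (σ i))
    (hρ : ∀ π : Equiv.Perm (Fin n), (∑ i, A i (π i)) ≤ ∑ i, A i (ρ i)) :
    mstar (fun i j => A i (σ j) - A j (σ j)) =
      mstar (fun i j => A i (ρ j) - A j (ρ j)) := by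
  funext i j
  exact le_antisymm (star_le_star A hA hfin ρ σ hρ hσ i j)
    (star_le_star A hA hfin σ ρ hσ hρ i j)

end MaxPlus
end

section
/- Let A be a definite max-plus matrix. Then eig(A) = {x ∈ R_max^n : A_{ij} ≤ x_i - x_j for all i ≠ j with A_{ij} = A*_{ij} and x_j finite}; that is, the eigenspace is cut out by the inequalities A_{ij} + x_j ≤ x_i ranging only over those off-diagonal entries which are 'optimal' (coincide with the corresponding entry of the closure), and conversely each such x satisfies all the inequalities A_{ij} + x_j ≤ x_i. -/
namespace MaxPlus

section P1
variable {n : ℕ} (A : Matrix (Fin n) (Fin n) EReal)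

def edges (l : List (Fin n)) : List (Fin n × Fin n) := l.zip l.tail

noncomputable def ww (l : List (Fin n)) : EReal := ((edges l).map fun p => A p.1 p.2).sum

def IsWalk (a b : Fin n) (l : List (Fin n)) : Prop :=
  l.head? = some a ∧ l.getLast? = some b

@[simp] lemma edges_nil : edges ([] : List (Fin n)) = [] := rfl
@[simp] lemma edges_single (a : Fin n) : edges [a] = [] := rfl
@[simp] lemma edges_cons_cons (a b : Fin n) (t : List (Fin n)) :
    edges (a :: b :: t) = (a, b) :: edges (b :: t) := rfl

@[simp] lemma ww_nil : ww A ([] : List (Fin n)) = 0 := rfl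
@[simp] lemma ww_single (a : Fin n) : ww A [a] = 0 := rfl
lemma ww_cons_cons (a b : Fin n) (t : List (Fin n)) :
    ww A (a :: b :: t) = A a b + ww A (b :: t) := by
  simp [ww]

lemma edges_append (l1 l2 : List (Fin n)) (v : Fin n) :
    edges (l1 ++ v :: l2) = edges (l1 ++ [v]) ++ edges (v :: l2) := by
  show (l1 ++ v :: l2).zip (l1 ++ v :: l2).tail
      = (l1 ++ [v]).zip (l1 ++ [v]).tail ++ (v :: l2).zip l2
  induction l1 with
  | nil => simp [edges]
  | cons a t ih =>
    cases t with
    | nil => simp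
    | cons c t' => simpa using ih

lemma ww_append (l1 l2 : List (Fin n)) (v : Fin n) :
    ww A (l1 ++ v :: l2) = ww A (l1 ++ [v]) + ww A (v :: l2) := by
  unfold ww; rw [edges_append, List.map_append, List.sum_append]

lemma walk_ne_nil {a b : Fin n} {l : List (Fin n)} (h : IsWalk a b l) : l ≠ [] := by
  rintro rfl; simp [IsWalk] at h

lemma walk_single {a b : Fin n} (h : IsWalk a b [a]) : a = b := by
  simp [IsWalk] at h; exact h

lemma walk_cons {a b c : Fin n} {t : List (Fin n)} (h : IsWalk a b (c :: t)) : c = a := by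
  simp [IsWalk] at h; exact h.1

lemma walk_concat_decomp {a b : Fin n} {l : List (Fin n)} (h : IsWalk a b l) :
    ∃ l', l = l' ++ [b] := by
  rcases l.eq_nil_or_concat with rfl | ⟨l', c, rfl⟩
  · exact absurd rfl (walk_ne_nil h)
  · have := h.2
    simp only [List.concat_eq_append, List.getLast?_concat, Option.some_inj] at this
    exact ⟨l', by simp [this]⟩

lemma walk_cons_walk {a b c : Fin n} {t : List (Fin n)} (h : IsWalk a b (c :: t))
    (d : Fin n) (ht : t.head? = some d) : IsWalk d b t := by
  cases t with
  | nil => simp at ht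
  | cons e t' =>
    refine ⟨ht, ?_⟩
    have := h.2
    simpa using this

lemma walk_append_right {a b : Fin n} {l1 l2 : List (Fin n)} {v : Fin n}
    (h : IsWalk a b (l1 ++ v :: l2)) : IsWalk v b (v :: l2) := by
  refine ⟨rfl, ?_⟩
  have := h.2
  rwa [List.getLast?_append_cons] at this

lemma walk_append_left {a b : Fin n} {l1 l2 : List (Fin n)} {v : Fin n}
    (h : IsWalk a b (l1 ++ v :: l2)) : IsWalk a v (l1 ++ [v]) := by
  constructor
  · have := h.1
    cases l1 with
    | nil => simpa using this
    | cons c t => simpa using this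
  · simp [List.getLast?_concat]

lemma walk_splice {a b c : Fin n} {l1 l2 : List (Fin n)}
    (h1 : IsWalk a b l1) (h2 : IsWalk b c l2) :
    ∃ l, IsWalk a c l ∧ edges l = edges l1 ++ edges l2 := by
  obtain ⟨l1', rfl⟩ := walk_concat_decomp h1
  cases l2 with
  | nil => exact absurd rfl (walk_ne_nil h2)
  | cons e t =>
    have he : e = b := walk_cons h2
    subst he
    refine ⟨l1' ++ e :: t, ⟨?_, ?_⟩, ?_⟩
    · have := h1.1
      cases l1' with
      | nil => simpa using this
      | cons f t' => simpa using this
    · rw [List.getLast?_append_cons]; exact h2.2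
    · rw [edges_append]

lemma sum_eq_bot {L : List EReal} (h : ∃ a ∈ L, a = ⊥) : L.sum = ⊥ := by
  induction L with
  | nil => simp at h
  | cons a t ih =>
    rcases h with ⟨x, hx, rfl⟩
    rcases List.mem_cons.1 hx with rfl | hx
    · simp
    · rw [List.sum_cons, ih ⟨⊥, hx, rfl⟩, EReal.add_bot]

lemma sum_ne_bot_s15 {L : List EReal} (h : ∀ a ∈ L, a ≠ ⊥) : L.sum ≠ ⊥ := by
  induction L with
  | nil => simp
  | cons a t ih =>
    rw [List.sum_cons]
    simp only [ne_eq, EReal.add_eq_bot_iff, not_or]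
    exact ⟨h a (by simp), ih fun x hx => h x (by simp [hx])⟩

lemma sum_eq_top {L : List EReal} (hb : ∀ a ∈ L, a ≠ ⊥) (h : ∃ a ∈ L, a = ⊤) : L.sum = ⊤ := by
  induction L with
  | nil => simp at h
  | cons a t ih =>
    rw [List.sum_cons]
    rcases h with ⟨x, hx, rfl⟩
    rcases List.mem_cons.1 hx with rfl | hx
    · exact EReal.top_add_of_ne_bot (sum_ne_bot_s15 fun y hy => hb y (by simp [hy]))
    · rw [ih (fun y hy => hb y (by simp [hy])) ⟨⊤, hx, rfl⟩]
      exact EReal.add_top_of_ne_bot (hb a (by simp))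

lemma add_ne_top' {a b : EReal} (ha : a ≠ ⊤) (hb : b ≠ ⊤) : a + b ≠ ⊤ := by
  induction a using EReal.rec <;> induction b using EReal.rec <;> simp_all [← EReal.coe_add]

lemma sum_ne_top {L : List EReal} (h : ∀ a ∈ L, a ≠ ⊤) : L.sum ≠ ⊤ := by
  induction L with
  | nil => simp
  | cons a t ih =>
    rw [List.sum_cons]
    exact add_ne_top' (h a (by simp)) (ih fun x hx => h x (by simp [hx]))

lemma ww_eq_bot {l : List (Fin n)} (h : ∃ e ∈ edges l, A e.1 e.2 = ⊥) : ww A l = ⊥ :=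
  sum_eq_bot (by rcases h with ⟨e, he, h⟩; exact ⟨A e.1 e.2, List.mem_map_of_mem he, h⟩)

lemma ww_ne_bot {l : List (Fin n)} (h : ∀ e ∈ edges l, A e.1 e.2 ≠ ⊥) : ww A l ≠ ⊥ :=
  sum_ne_bot_s15 (by rintro y hy; rcases List.mem_map.1 hy with ⟨e, he, rfl⟩; exact h e he)

lemma ww_eq_top {l : List (Fin n)} (hb : ∀ e ∈ edges l, A e.1 e.2 ≠ ⊥)
    (h : ∃ e ∈ edges l, A e.1 e.2 = ⊤) : ww A l = ⊤ :=
  sum_eq_top (by rintro y hy; rcases List.mem_map.1 hy with ⟨e, he, rfl⟩; exact hb e he)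
    (by rcases h with ⟨e, he, h⟩; exact ⟨A e.1 e.2, List.mem_map_of_mem he, h⟩)

lemma ww_ne_top {l : List (Fin n)} (h : ∀ e ∈ edges l, A e.1 e.2 ≠ ⊤) : ww A l ≠ ⊤ :=
  sum_ne_top (by rintro y hy; rcases List.mem_map.1 hy with ⟨e, he, rfl⟩; exact h e he)

end P1

section Part2
variable {n : ℕ} (A : Matrix (Fin n) (Fin n) EReal)

lemma finsup_attained {ι : Type*} [Nonempty ι] [Finite ι] (f : ι → EReal) :
    ∃ k, (⨆ i, f i) = f k := by
  obtain ⟨k, hk⟩ := Finite.exists_max f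
  exact ⟨k, le_antisymm (iSup_le hk) (le_iSup f k)⟩

lemma mpow_le_mstar (m : ℕ) (a b : Fin n) : mpow A m a b ≤ mstar A a b :=
  le_iSup (fun m => mpow A m a b) m

lemma mpow_one (a b : Fin n) : mpow A 1 a b = A a b := by
  show (⨆ k, mId n a k + A k b) = A a b
  refine le_antisymm (iSup_le fun k => ?_) ?_
  · by_cases h : a = k
    · subst h; simp [mId]
    · simp [mId, h]
  · have : mId n a a + A a b ≤ ⨆ k, mId n a k + A k b :=
      le_iSup (fun k => mId n a k + A k b) a
    simpa [mId] using this

lemma le_mstar (a b : Fin n) : A a b ≤ mstar A a b := by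
  rw [← mpow_one A a b]; exact mpow_le_mstar A 1 a b

lemma top_entry_optimal {a b : Fin n} (h : A a b = ⊤) : A a b = mstar A a b :=
  le_antisymm (le_mstar A a b) (by rw [h]; exact le_top)

lemma ww_concat {k : Fin n} {l : List (Fin n)} (hl : l.getLast? = some k) (b : Fin n) :
    ww A (l ++ [b]) = ww A l + A k b := by
  rcases l.eq_nil_or_concat with rfl | ⟨l', c, rfl⟩
  · simp at hl
  · simp only [List.concat_eq_append, List.getLast?_concat, Option.some_inj] at hl
    subst hl
    simp only [List.concat_eq_append, List.append_assoc, List.singleton_append]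
    rw [ww_append A l' [b] c]
    simp [ww_cons_cons]

lemma ww_le_mpow {a b : Fin n} {l : List (Fin n)} (h : IsWalk a b l) :
    ww A l ≤ mpow A (l.length - 1) a b := by
  induction l using List.reverseRecOn generalizing b with
  | nil => exact absurd rfl (walk_ne_nil h)
  | append_singleton l' c ih =>
    have hcb : c = b := by
      have := h.2; simp [List.getLast?_concat] at this; exact this
    subst hcb
    rcases l'.eq_nil_or_concat with rfl | ⟨l'', d, rfl⟩
    · have hab : a = c := by have := h.1; simp at this; exact this.symm
      subst hab
      simp [mpow, mId]
    · simp only [List.concat_eq_append] at *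
      have hld : (l'' ++ [d]).getLast? = some d := by simp [List.getLast?_concat]
      have hwalk : IsWalk a d (l'' ++ [d]) := by
        refine ⟨?_, hld⟩
        have := h.1
        cases l'' with
        | nil => simpa using this
        | cons f t => simpa using this
      have ihd := ih hwalk
      rw [ww_concat A hld c]
      have hlen : (l'' ++ [d] ++ [c]).length - 1 = ((l'' ++ [d]).length - 1) + 1 := by
        simp
      rw [hlen]
      have step : mpow A ((l'' ++ [d]).length - 1) a d + A d c ≤
          mpow A (((l'' ++ [d]).length - 1) + 1) a c :=
        le_iSup (fun k => mpow A ((l'' ++ [d]).length - 1) a k + A k c) d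
      exact le_trans (add_le_add_left ihd (A d c)) step

lemma mpow_realize (m : ℕ) (a b : Fin n) :
    mpow A m a b = ⊥ ∨ ∃ l, IsWalk a b l ∧ l.length = m + 1 ∧ ww A l = mpow A m a b := by
  haveI : Nonempty (Fin n) := ⟨a⟩
  induction m generalizing b with
  | zero =>
    by_cases h : a = b
    · subst h
      exact Or.inr ⟨[a], ⟨rfl, rfl⟩, rfl, by simp [mpow, mId]⟩
    · left; simp [mpow, mId, h]
  | succ m ih =>
    obtain ⟨k0, hk0⟩ := finsup_attained (fun k => mpow A m a k + A k b)
    have hrw : mpow A (m+1) a b = mpow A m a k0 + A k0 b := hk0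
    rcases ih k0 with hbot | ⟨l, hw, hlen, hww⟩
    · left; rw [hrw, hbot, EReal.bot_add]
    · right
      obtain ⟨l', rfl⟩ := walk_concat_decomp hw
      refine ⟨(l' ++ [k0]) ++ [b], ⟨?_, by simp [List.getLast?_concat]⟩, by simp [List.length_append] at hlen ⊢; omega, ?_⟩
      · have := hw.1
        cases l' with
        | nil => simpa using this
        | cons f t => simpa using this
      · rw [ww_concat A (k := k0) (l := l' ++ [k0]) (by simp [List.getLast?_concat]) b, hww, hrw]

end Part2

section Part3
variable {n : ℕ} (A : Matrix (Fin n) (Fin n) EReal)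

lemma ww_le_mstar {a b : Fin n} {l : List (Fin n)} (h : IsWalk a b l) :
    ww A l ≤ mstar A a b :=
  le_trans (ww_le_mpow A h) (mpow_le_mstar A _ a b)

lemma cycleWeight_eq_ww (v : Fin n) (t : List (Fin n)) :
    cycleWeight A (v :: t) = ww A (v :: t ++ [v]) := by
  have hzip : ∀ (t : List (Fin n)) (x y : Fin n),
      (x :: t ++ [y]).zip (t ++ [y]) = (x :: t).zip (t ++ [y]) := by
    intro t
    induction t with
    | nil => intro x y; simp
    | cons a t' ih => intro x y; simpa using ih a y
  have hrot : (v :: t).rotate 1 = t ++ [v] := by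
    rw [show (1 : ℕ) = 0 + 1 from rfl, List.rotate_cons_succ, List.rotate_zero]
  unfold cycleWeight ww edges
  rw [hrot]
  congr 1
  rw [show (v :: t ++ [v]).tail = t ++ [v] from rfl, hzip]

lemma dup_decomp {l : List (Fin n)} (h : ¬ l.Nodup) :
    ∃ l1 v l2 l3, l = l1 ++ v :: l2 ++ v :: l3 := by
  induction l with
  | nil => simp at h
  | cons a t ih =>
    by_cases ha : a ∈ t
    · obtain ⟨s1, s2, rfl⟩ := List.append_of_mem ha
      exact ⟨[], a, s1, s2, by simp⟩
    · have : ¬ t.Nodup := fun hn => h (List.nodup_cons.2 ⟨ha, hn⟩)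
      obtain ⟨l1, v, l2, l3, rfl⟩ := ih this
      exact ⟨a :: l1, v, l2, l3, by simp⟩

lemma closed_walk_nonpos (hd : Definite A) : ∀ (m : ℕ) (v : Fin n) (t : List (Fin n)),
    t.length ≤ m → ww A (v :: t ++ [v]) ≤ 0 := by
  intro m
  induction m using Nat.strong_induction_on with
  | _ m ih =>
    intro v t hlen
    by_cases hnd : (v :: t).Nodup
    · rw [← cycleWeight_eq_ww]
      exact hd.1 (v :: t) ⟨List.cons_ne_nil _ _, hnd⟩
    · obtain ⟨l1, u, l2, l3, hdec⟩ := dup_decomp hnd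
      cases l1 with
      | nil =>
        simp only [List.nil_append, List.cons.injEq] at hdec
        obtain ⟨rfl, rfl⟩ := hdec
        show ww A (v :: (l2 ++ v :: l3) ++ [v]) ≤ 0
        have h1 : ww A (v :: (l2 ++ v :: l3) ++ [v])
            = ww A (v :: l2 ++ [v]) + ww A (v :: l3 ++ [v]) := by
          have := ww_append A (v :: l2) (l3 ++ [v]) v
          simpa using this
        rw [h1]
        have hl2 : l2.length < m := by
          simp [List.length_append] at hlen ⊢; omega
        have hl3 : l3.length < m := by
          simp [List.length_append] at hlen ⊢; omega
        exact add_nonpos (ih _ hl2 v l2 le_rfl) (ih _ hl3 v l3 le_rfl)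
      | cons y l1' =>
        simp only [List.cons_append, List.cons.injEq] at hdec
        obtain ⟨rfl, rfl⟩ := hdec
        show ww A (v :: (l1' ++ u :: l2 ++ u :: l3) ++ [v]) ≤ 0
        have h1 : ww A (v :: (l1' ++ u :: l2 ++ u :: l3) ++ [v])
            = ww A (v :: l1' ++ [u]) + ww A (u :: l2 ++ u :: (l3 ++ [v])) := by
          have := ww_append A (v :: l1') (l2 ++ u :: (l3 ++ [v])) u
          simpa using this
        have h2 : ww A (u :: l2 ++ u :: (l3 ++ [v]))
            = ww A (u :: l2 ++ [u]) + ww A (u :: l3 ++ [v]) := by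
          have := ww_append A (u :: l2) (l3 ++ [v]) u
          simpa using this
        have h3 : ww A (v :: l1' ++ [u]) + ww A (u :: l3 ++ [v])
            = ww A (v :: (l1' ++ u :: l3) ++ [v]) := by
          have := ww_append A (v :: l1') (l3 ++ [v]) u
          simp at this ⊢
          rw [this]
        have hmid : ww A (u :: l2 ++ [u]) ≤ 0 := by
          refine ih l2.length ?_ u l2 le_rfl
          simp [List.length_append] at hlen ⊢; omega
        have houter : ww A (v :: (l1' ++ u :: l3) ++ [v]) ≤ 0 := by
          refine ih (l1' ++ u :: l3).length ?_ v _ le_rfl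
          simp [List.length_append] at hlen ⊢; omega
        calc ww A (v :: (l1' ++ u :: l2 ++ u :: l3) ++ [v])
            = ww A (v :: l1' ++ [u]) + (ww A (u :: l2 ++ [u]) + ww A (u :: l3 ++ [v])) := by
              rw [h1, h2]
          _ ≤ ww A (v :: l1' ++ [u]) + (0 + ww A (u :: l3 ++ [v])) := by
              exact add_le_add_right (add_le_add_left hmid _) _
          _ = ww A (v :: l1' ++ [u]) + ww A (u :: l3 ++ [v]) := by rw [zero_add]
          _ = ww A (v :: (l1' ++ u :: l3) ++ [v]) := h3
          _ ≤ 0 := houter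

lemma walk_reduce (hd : Definite A) : ∀ (m : ℕ) {a b : Fin n} {l : List (Fin n)},
    l.length ≤ m → IsWalk a b l →
    ∃ l', IsWalk a b l' ∧ l'.Nodup ∧ ww A l ≤ ww A l' := by
  intro m
  induction m using Nat.strong_induction_on with
  | _ m ih =>
    intro a b l hlen h
    by_cases hnd : l.Nodup
    · exact ⟨l, h, hnd, le_rfl⟩
    · obtain ⟨l1, u, l2, l3, rfl⟩ := dup_decomp hnd
      have h1 : ww A (l1 ++ u :: l2 ++ u :: l3)
          = ww A (l1 ++ [u]) + ww A (u :: l2 ++ u :: l3) := by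
        have := ww_append A l1 (l2 ++ u :: l3) u
        simpa using this
      have h2 : ww A (u :: l2 ++ u :: l3)
          = ww A (u :: l2 ++ [u]) + ww A (u :: l3) := by
        have := ww_append A (u :: l2) l3 u
        simpa using this
      have hmid : ww A (u :: l2 ++ [u]) ≤ 0 := by
        have := closed_walk_nonpos A hd l2.length u l2 le_rfl
        simpa using this
      have hle : ww A (l1 ++ u :: l2 ++ u :: l3) ≤ ww A (l1 ++ u :: l3) := by
        rw [h1, h2, ww_append A l1 l3 u]
        calc ww A (l1 ++ [u]) + (ww A (u :: l2 ++ [u]) + ww A (u :: l3))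
            ≤ ww A (l1 ++ [u]) + (0 + ww A (u :: l3)) :=
              add_le_add_right (add_le_add_left hmid _) _
          _ = ww A (l1 ++ [u]) + ww A (u :: l3) := by rw [zero_add]
      have hwalk' : IsWalk a b (l1 ++ u :: l3) := by
        constructor
        · have := h.1
          cases l1 with
          | nil => simpa using this
          | cons f t => simpa using this
        · have := h.2
          rw [List.getLast?_append_cons] at this ⊢
          cases l3 with
          | nil => simpa using this
          | cons g t => simpa using this
      have hlen' : (l1 ++ u :: l3).length < m := by
        simp [List.length_append] at hlen ⊢; omega
      obtain ⟨l', hw', hnd', hle'⟩ := ih _ hlen' le_rfl hwalk'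
      exact ⟨l', hw', hnd', le_trans hle hle'⟩

lemma mstar_attained_s15 (hd : Definite A) {a b : Fin n} (h : mstar A a b ≠ ⊥) :
    ∃ l, IsWalk a b l ∧ ww A l = mstar A a b := by
  haveI : Nonempty (Fin n) := ⟨a⟩
  obtain ⟨k0, hk0⟩ := finsup_attained (fun k : Fin (n+1) => mpow A k a b)
  have hcap : ∀ m : ℕ, mpow A m a b ≤ mpow A (k0 : ℕ) a b := by
    intro m
    rcases mpow_realize A m a b with hbot | ⟨l, hw, hlen, hww⟩
    · rw [hbot]; exact bot_le
    · obtain ⟨l', hw', hnd', hle'⟩ := walk_reduce A hd l.length le_rfl hw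
      have hlb : l'.length ≤ n := by
        simpa using List.Nodup.length_le_card hnd'
      have h2 := ww_le_mpow A hw'
      have h3 : mpow A (l'.length - 1) a b ≤ mpow A (k0 : ℕ) a b := by
        have hfin : l'.length - 1 < n + 1 := by omega
        have := hk0 ▸ le_iSup (fun k : Fin (n+1) => mpow A k a b) ⟨l'.length - 1, hfin⟩
        simpa [hk0] using this
      calc mpow A m a b = ww A l := hww.symm
        _ ≤ ww A l' := hle'
        _ ≤ mpow A (l'.length - 1) a b := h2
        _ ≤ mpow A (k0 : ℕ) a b := h3
  have hstar : mstar A a b = mpow A (k0 : ℕ) a b :=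
    le_antisymm (iSup_le hcap) (mpow_le_mstar A _ a b)
  rcases mpow_realize A (k0 : ℕ) a b with hbot | ⟨l, hw, _, hww⟩
  · rw [hstar, hbot] at h; exact absurd rfl h
  · exact ⟨l, hw, by rw [hww, ← hstar]⟩

lemma edge_mem_decomp {l : List (Fin n)} {e : Fin n × Fin n} (h : e ∈ edges l) :
    ∃ l1 l2, l = l1 ++ e.1 :: e.2 :: l2 := by
  induction l with
  | nil => simp at h
  | cons a t ih =>
    cases t with
    | nil => simp at h
    | cons c t' =>
      rw [edges_cons_cons, List.mem_cons] at h
      rcases h with rfl | h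
      · exact ⟨[], t', rfl⟩
      · obtain ⟨l1, l2, hdec⟩ := ih h
        exact ⟨a :: l1, l2, by rw [hdec]; rfl⟩

end Part3

section Part4
variable {n : ℕ} (A : Matrix (Fin n) (Fin n) EReal)

lemma exists_coe {y : EReal} (hb : y ≠ ⊥) (ht : y ≠ ⊤) : ∃ r : ℝ, y = (r : EReal) := by
  induction y using EReal.rec with
  | bot => exact absurd rfl hb
  | coe r => exact ⟨r, rfl⟩
  | top => exact absurd rfl ht

variable (x : Fin n → EReal)

lemma good_of_optimal (hd : Definite A)
    (hx : ∀ i j, i ≠ j → A i j = mstar A i j → A i j + x j ≤ x i)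
    {p q : Fin n} (hopt : A p q = mstar A p q) : A p q + x q ≤ x p := by
  by_cases hpq : p = q
  · subst hpq; rw [hd.2 p, zero_add]
  · exact hx p q hpq hopt

lemma good_chain {a b : Fin n} : ∀ {l : List (Fin n)}, IsWalk a b l →
    (∀ e ∈ edges l, A e.1 e.2 + x e.2 ≤ x e.1) → ww A l + x b ≤ x a := by
  intro l
  induction l generalizing a with
  | nil => intro h; exact absurd rfl (walk_ne_nil h)
  | cons c t ih =>
    intro h hgood
    have hca : c = a := walk_cons h
    subst hca
    cases t with
    | nil =>
      have : c = b := walk_single h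
      subst this
      simp
    | cons z t' =>
      have hwz : IsWalk z b (z :: t') := walk_cons_walk h z rfl
      have ihz := ih hwz fun e he => hgood e (by rw [edges_cons_cons]; exact List.mem_cons_of_mem _ he)
      rw [ww_cons_cons, add_assoc]
      calc A c z + (ww A (z :: t') + x b) ≤ A c z + x z :=
            add_le_add_right ihz _
        _ ≤ x c := hgood (c, z) (by simp)

/-- the key real case : if `A* u w` is finite then the inequality holds -/
lemma real_case (hd : Definite A)
    (hx : ∀ i j, i ≠ j → A i j = mstar A i j → A i j + x j ≤ x i)
    {u w : Fin n} (hb : mstar A u w ≠ ⊥) (ht : mstar A u w ≠ ⊤) :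
    mstar A u w + x w ≤ x u := by
  obtain ⟨l, hwalk, hww⟩ := mstar_attained_s15 A hd hb
  have hbf : ∀ e ∈ edges l, A e.1 e.2 ≠ ⊥ := by
    intro e he hebot
    exact hb (by rw [← hww]; exact ww_eq_bot A ⟨e, he, hebot⟩)
  have htf : ∀ e ∈ edges l, A e.1 e.2 ≠ ⊤ := by
    intro e he hetop
    exact ht (by rw [← hww]; exact ww_eq_top A hbf ⟨e, he, hetop⟩)
  have hopt : ∀ e ∈ edges l, A e.1 e.2 = mstar A e.1 e.2 := by
    intro e he
    by_contra hne
    obtain ⟨l1, l2, hdec⟩ := edge_mem_decomp he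
    obtain ⟨p, q⟩ := e
    simp only at hdec
    subst hdec
    -- weights of the two parts
    have hedges : edges (l1 ++ p :: q :: l2)
        = edges (l1 ++ [p]) ++ ((p, q) :: edges (q :: l2)) := by
      rw [edges_append]; rfl
    have hsub1 : ∀ e ∈ edges (l1 ++ [p]), e ∈ edges (l1 ++ p :: q :: l2) := by
      intro e he'; rw [hedges]; exact List.mem_append_left _ he'
    have hsub2 : ∀ e ∈ edges (q :: l2), e ∈ edges (l1 ++ p :: q :: l2) := by
      intro e he'; rw [hedges]
      exact List.mem_append_right _ (List.mem_cons_of_mem _ he')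
    obtain ⟨r1, hr1⟩ := exists_coe (ww_ne_bot A fun e he' => hbf e (hsub1 e he'))
      (ww_ne_top A fun e he' => htf e (hsub1 e he'))
    obtain ⟨r2, hr2⟩ := exists_coe (ww_ne_bot A fun e he' => hbf e (hsub2 e he'))
      (ww_ne_top A fun e he' => htf e (hsub2 e he'))
    -- a strictly better power
    have hlt : A p q < mstar A p q :=
      lt_of_le_of_ne (le_mstar A p q) hne
    rw [mstar, lt_iSup_iff] at hlt
    obtain ⟨m, hm⟩ := hlt
    have hmb : mpow A m p q ≠ ⊥ := by
      intro hc; rw [hc] at hm; exact absurd hm (by simp)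
    rcases mpow_realize A m p q with hc | ⟨Q, hQwalk, _, hQww⟩
    · exact hmb hc
    -- splice
    have hw1 : IsWalk u p (l1 ++ [p]) := walk_append_left hwalk
    have hw2 : IsWalk q w (q :: l2) := by
      refine walk_append_right (a := u) (b := w) (l1 := l1 ++ [p]) (l2 := l2) (v := q) ?_
      rwa [List.append_assoc, List.singleton_append]
    obtain ⟨R1, hR1walk, hR1edges⟩ := walk_splice hw1 hQwalk
    obtain ⟨R, hRwalk, hRedges⟩ := walk_splice hR1walk hw2
    have hRww : ww A R = ww A (l1 ++ [p]) + (ww A Q + ww A (q :: l2)) := by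
      unfold ww
      rw [hRedges, hR1edges, List.map_append, List.map_append, List.sum_append,
        List.sum_append, add_assoc]
    have hlww : ww A (l1 ++ p :: q :: l2)
        = ww A (l1 ++ [p]) + (A p q + ww A (q :: l2)) := by
      rw [ww_append A l1 (q :: l2) p, ww_cons_cons]
    have hcontr : ww A R ≤ mstar A u w := ww_le_mstar A hRwalk
    rw [hww.symm, hlww, hRww] at hcontr
    rw [hQww, hr1, hr2] at hcontr
    have hstrict : (r1 : EReal) + (A p q + (r2 : EReal))
        < (r1 : EReal) + (mpow A m p q + (r2 : EReal)) :=
      EReal.add_lt_add_left_coe (EReal.add_lt_add_right_coe hm r2) r1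
    rw [hr1, hr2] at hlww
    exact absurd hcontr (not_le.2 hstrict)
  have hgood : ∀ e ∈ edges l, A e.1 e.2 + x e.2 ≤ x e.1 :=
    fun e he => good_of_optimal A x hd hx (hopt e he)
  calc mstar A u w + x w = ww A l + x w := by rw [hww]
    _ ≤ x u := good_chain A x hwalk hgood

end Part4

section Part5
variable {n : ℕ} (A : Matrix (Fin n) (Fin n) EReal)

def Reach (a b : Fin n) : Prop :=
  ∃ l, IsWalk a b l ∧ ∀ e ∈ edges l, A e.1 e.2 ≠ ⊥

def ReachT (a b : Fin n) : Prop :=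
  ∃ l, IsWalk a b l ∧ (∀ e ∈ edges l, A e.1 e.2 ≠ ⊥) ∧ ∃ e ∈ edges l, A e.1 e.2 = ⊤

lemma reach_trans {a b c : Fin n} (h1 : Reach A a b) (h2 : Reach A b c) : Reach A a c := by
  obtain ⟨l1, hw1, hb1⟩ := h1
  obtain ⟨l2, hw2, hb2⟩ := h2
  obtain ⟨l, hw, hedges⟩ := walk_splice hw1 hw2
  refine ⟨l, hw, ?_⟩
  intro e he
  rw [hedges, List.mem_append] at he
  rcases he with he | he
  · exact hb1 e he
  · exact hb2 e he

lemma reachT_of_reachT_reach {a b c : Fin n} (h1 : ReachT A a b) (h2 : Reach A b c) :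
    ReachT A a c := by
  obtain ⟨l1, hw1, hb1, e1, he1, ht1⟩ := h1
  obtain ⟨l2, hw2, hb2⟩ := h2
  obtain ⟨l, hw, hedges⟩ := walk_splice hw1 hw2
  refine ⟨l, hw, ?_, ⟨e1, ?_, ht1⟩⟩
  · intro e he
    rw [hedges, List.mem_append] at he
    rcases he with he | he
    · exact hb1 e he
    · exact hb2 e he
  · rw [hedges, List.mem_append]; exact Or.inl he1

lemma reachT_of_reach_reachT {a b c : Fin n} (h1 : Reach A a b) (h2 : ReachT A b c) :
    ReachT A a c := by
  obtain ⟨l1, hw1, hb1⟩ := h1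
  obtain ⟨l2, hw2, hb2, e2, he2, ht2⟩ := h2
  obtain ⟨l, hw, hedges⟩ := walk_splice hw1 hw2
  refine ⟨l, hw, ?_, ⟨e2, ?_, ht2⟩⟩
  · intro e he
    rw [hedges, List.mem_append] at he
    rcases he with he | he
    · exact hb1 e he
    · exact hb2 e he
  · rw [hedges, List.mem_append]; exact Or.inr he2

lemma reach_of_reachT {a b : Fin n} (h : ReachT A a b) : Reach A a b := by
  obtain ⟨l, hw, hb, -⟩ := h
  exact ⟨l, hw, hb⟩

lemma reachT_irrefl (hd : Definite A) (a : Fin n) : ¬ ReachT A a a := by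
  rintro ⟨l, hw, hbf, heT⟩
  have htop : ww A l = ⊤ := ww_eq_top A hbf heT
  obtain ⟨l', hl'⟩ := walk_concat_decomp hw
  cases l' with
  | nil =>
    rw [hl'] at heT
    simp at heT
  | cons c t' =>
    have hca : c = a := by
      have := hw.1; rw [hl'] at this; simpa using this
    subst hca
    rw [hl'] at htop
    have := closed_walk_nonpos A hd t'.length c t' le_rfl
    rw [htop] at this
    exact absurd this (by simp)

noncomputable def rank (a : Fin n) : ℕ := Set.ncard {z | ReachT A a z}

lemma rank_le_of_reach {a b : Fin n} (h : Reach A a b) : rank A b ≤ rank A a := by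
  apply Set.ncard_le_ncard _ (Set.toFinite _)
  intro z hz
  exact reachT_of_reach_reachT A h hz

lemma rank_lt_of_reachT (hd : Definite A) {a b : Fin n} (h : ReachT A a b) :
    rank A b < rank A a := by
  apply Set.ncard_lt_ncard _ (Set.toFinite _)
  constructor
  · intro z hz
    exact reachT_of_reachT_reach A h (reach_of_reachT A hz)
  · intro hsub
    have : b ∈ {z | ReachT A a z} := h
    exact reachT_irrefl A hd b (hsub this)

variable (x : Fin n → EReal)

/-- the top case, by induction on the rank gap -/
lemma top_case (hd : Definite A)
    (hx : ∀ i j, i ≠ j → A i j = mstar A i j → A i j + x j ≤ x i) :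
    ∀ N : ℕ, ∀ u w : Fin n, rank A u ≤ N + rank A w → mstar A u w = ⊤ → x w ≠ ⊥ →
      x u = ⊤ := by
  intro N
  induction N using Nat.strong_induction_on with
  | _ N ihN =>
    intro u w hrank hstar hxw
    obtain ⟨l, hwalk, hww⟩ := mstar_attained_s15 A hd (by rw [hstar]; exact top_ne_bot)
    rw [hstar] at hww
    have hbf : ∀ e ∈ edges l, A e.1 e.2 ≠ ⊥ := by
      intro e he hebot
      rw [ww_eq_bot A ⟨e, he, hebot⟩] at hww
      exact absurd hww (by simp)
    have hT : ∃ e ∈ edges l, A e.1 e.2 = ⊤ := by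
      by_contra hc
      push_neg at hc
      exact ww_ne_top A hc hww
    -- the walk witnesses ReachT u w, so N ≥ 1
    have hRT : ReachT A u w := ⟨l, hwalk, hbf, hT⟩
    have hN1 : 1 ≤ N := by
      have := rank_lt_of_reachT A hd hRT
      omega
    have claim : ∀ l2 : List (Fin n), ∀ v lp, l = lp ++ v :: l2 →
        x v ≠ ⊥ ∧ ((∃ e ∈ edges (v :: l2), A e.1 e.2 = ⊤ ∨
          (A e.1 e.2 ≠ mstar A e.1 e.2 ∧ mstar A e.1 e.2 = ⊤)) → x v = ⊤) := by
      intro l2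
      induction l2 with
      | nil =>
        intro v lp hdec
        have hvw : v = w := by
          have := hwalk.2
          rw [hdec, List.getLast?_concat] at this
          simpa using this
        subst hvw
        exact ⟨hxw, by rintro ⟨e, he, -⟩; simp at he⟩
      | cons z t ih =>
        intro v lp hdec
        obtain ⟨hz_ne_bot, hz_top⟩ := ih z (lp ++ [v])
          (by rw [hdec, List.append_assoc]; rfl)
        have hvz_mem : (v, z) ∈ edges l := by
          rw [hdec, edges_append]
          exact List.mem_append_right _ (by simp)
        have hAvz : A v z ≠ ⊥ := hbf _ hvz_mem
        have hreach_uv : Reach A u v := by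
          refine ⟨lp ++ [v], walk_append_left (by rw [← hdec]; exact hwalk), ?_⟩
          intro e he
          refine hbf e ?_
          rw [hdec, edges_append]
          exact List.mem_append_left _ he
        have hwalk_zt : IsWalk z w (z :: t) := by
          refine walk_append_right (a := u) (l1 := lp ++ [v]) ?_
          rw [List.append_assoc, List.singleton_append, ← hdec]
          exact hwalk
        have hreach_zw : Reach A z w := by
          refine ⟨z :: t, hwalk_zt, ?_⟩
          intro e he
          refine hbf e ?_
          rw [hdec, edges_append (l2 := z :: t)]
          refine List.mem_append_right _ ?_
          rw [edges_cons_cons]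
          exact List.mem_cons_of_mem _ he
        by_cases hvzT : A v z = ⊤
        · -- top edge, optimal, pushes x v to ⊤
          have hgood := good_of_optimal A x hd hx (top_entry_optimal A hvzT)
          rw [hvzT, EReal.top_add_of_ne_bot hz_ne_bot] at hgood
          have hxv : x v = ⊤ := top_le_iff.1 hgood
          exact ⟨by rw [hxv]; exact top_ne_bot, fun _ => hxv⟩
        · by_cases hS : A v z ≠ mstar A v z ∧ mstar A v z = ⊤
          · -- S edge : use outer induction
            have hrank' : rank A v ≤ (N - 1) + rank A z := by
              have h1 : rank A v ≤ rank A u := rank_le_of_reach A hreach_uv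
              have h2 : rank A w ≤ rank A z := rank_le_of_reach A hreach_zw
              obtain ⟨eT, heT, heTtop⟩ := hT
              rw [hdec, edges_append (l2 := z :: t)] at heT
              rcases List.mem_append.1 heT with hpre | hsuf
              · have : ReachT A u v := by
                  refine ⟨lp ++ [v], walk_append_left (by rw [← hdec]; exact hwalk), ?_, eT, hpre, heTtop⟩
                  intro e he
                  refine hbf e ?_
                  rw [hdec, edges_append]
                  exact List.mem_append_left _ he
                have h3 := rank_lt_of_reachT A hd this
                omega
              · rw [edges_cons_cons] at hsuf
                rcases List.mem_cons.1 hsuf with rfl | hsuf'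
                · exact absurd heTtop hvzT
                · have : ReachT A z w := by
                    refine ⟨z :: t, hwalk_zt, ?_, eT, hsuf', heTtop⟩
                    intro e he
                    refine hbf e ?_
                    rw [hdec, edges_append (l2 := z :: t)]
                    refine List.mem_append_right _ ?_
                    rw [edges_cons_cons]
                    exact List.mem_cons_of_mem _ he
                  have h3 := rank_lt_of_reachT A hd this
                  omega
            have hxv : x v = ⊤ :=
              ihN (N - 1) (by omega) v z hrank' hS.2 hz_ne_bot
            exact ⟨by rw [hxv]; exact top_ne_bot, fun _ => hxv⟩
          · -- tame edge : good
            have hgood : A v z + x z ≤ x v := by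
              rcases not_and_or.1 hS with hopt | hsT
              · exact good_of_optimal A x hd hx (not_not.1 hopt)
              · have hsb : mstar A v z ≠ ⊥ := fun hc => hAvz (le_bot_iff.1 (hc ▸ le_mstar A v z))
                have := real_case A x hd hx hsb hsT
                exact le_trans (add_le_add_left (le_mstar A v z) (x z)) this
            have hxv_ne_bot : x v ≠ ⊥ := by
              intro hc
              rw [hc, le_bot_iff, EReal.add_eq_bot_iff] at hgood
              rcases hgood with h | h
              · exact hAvz h
              · exact hz_ne_bot h
            refine ⟨hxv_ne_bot, ?_⟩
            rintro ⟨e, he, hcase⟩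
            rw [edges_cons_cons] at he
            rcases List.mem_cons.1 he with rfl | he'
            · rcases hcase with htop | hScase
              · exact absurd htop hvzT
              · exact absurd hScase hS
            · have hxz_top : x z = ⊤ := hz_top ⟨e, he', hcase⟩
              rw [hxz_top, EReal.add_top_of_ne_bot hAvz] at hgood
              exact top_le_iff.1 hgood
    -- apply claim to the whole walk
    cases l with
    | nil => exact absurd rfl (walk_ne_nil hwalk)
    | cons c t =>
      have hca : c = u := walk_cons hwalk
      subst hca
      obtain ⟨-, htop⟩ := claim t c []  rfl
      exact htop (by obtain ⟨e, he, het⟩ := hT; exact ⟨e, he, Or.inl het⟩)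

end Part5

/-- The eigenspace of a definite matrix is cut out by the inequalities
`A_{ij} + x_j ≤ x_i` taken only over the "optimal" off-diagonal entries, those with
`A_{ij} = A*_{ij}` (and each such `x` in fact satisfies all the inequalities). -/
theorem eig_eq_optimal_inequalities {n : ℕ} (A : Matrix (Fin n) (Fin n) EReal)
    (hd : Definite A) :
    eig A = {x : Fin n → EReal |
      ∀ i j, i ≠ j → A i j = mstar A i j → A i j + x j ≤ x i} := by
  ext x
  simp only [eig, Set.mem_setOf_eq]
  constructor
  · intro hx i j _ _
    calc A i j + x j ≤ ⨆ k, A i k + x k := le_iSup (fun k => A i k + x k) j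
      _ = x i := congrFun hx i
  · intro hx
    have hedge : ∀ i j, A i j + x j ≤ x i := by
      intro i j
      by_cases hopt : A i j = mstar A i j
      · exact good_of_optimal A x hd hx hopt
      · by_cases hbot : A i j = ⊥
        · rw [hbot, EReal.bot_add]; exact bot_le
        · by_cases hstarT : mstar A i j = ⊤
          · by_cases hxj : x j = ⊥
            · rw [hxj, EReal.add_bot]; exact bot_le
            · have hrank : rank A i ≤ n + rank A j := by
                have h1 : rank A i ≤ n := by
                  have h2 : Set.ncard {z | ReachT A i z} ≤ Set.ncard (Set.univ : Set (Fin n)) :=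
                    Set.ncard_le_ncard (Set.subset_univ _) (Set.toFinite _)
                  rw [Set.ncard_univ] at h2
                  simpa [rank] using h2
                omega
              have hxi : x i = ⊤ := top_case A x hd hx n i j hrank hstarT hxj
              rw [hxi]; exact le_top
          · have hsb : mstar A i j ≠ ⊥ := fun hc => hbot (le_bot_iff.1 (hc ▸ le_mstar A i j))
            have := real_case A x hd hx hsb hstarT
            exact le_trans (add_le_add_left (le_mstar A i j) (x j)) this
    funext i
    apply le_antisymm
    · exact iSup_le (hedge i)
    · calc x i = A i i + x i := by rw [hd.2 i, zero_add]
        _ ≤ ⨆ j, A i j + x j := le_iSup (fun j => A i j + x j) i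

end MaxPlus
end
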